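/- Let $a_k(x) = A_k x + b_k$ be a sequence of affine maps $\mathbb{R}^d \to \mathbb{R}^d$ (with $A_k$ a $d\times d$ matrix and $b_k \in \mathbb{R}^d$). Then, up to a subsequence, exactly one of the following holds: either $\sup_k \sup_{|x| \le 1} |a_k(x)| < +\infty$, or $|a_k(x)| \to +\infty$ for Lebesgue-a.e.\ $x \in \mathbb{R}^d$. -/

import Mathlib

open MeasureTheory Filter Metric Topology

private lemma affine_null_aux {d : ℕ}
    (A : EuclideanSpace ℝ (Fin d) →L[ℝ] EuclideanSpace ℝ (Fin d))
    (β : EuclideanSpace ℝ (Fin d)) (h : A ≠ 0 ∨ β ≠ 0) :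
    (volume : Measure (EuclideanSpace ℝ (Fin d))) {x | A x + β = 0} = 0 := by
  by_cases hA : A = 0
  · have hβ : β ≠ 0 := h.resolve_left (not_not_intro hA)
    have : {x : EuclideanSpace ℝ (Fin d) | A x + β = 0} = ∅ := by
      ext x; simp [hA, hβ]
    simp [this]
  · by_cases hne : ∃ x0, A x0 + β = 0
    · obtain ⟨x0, hx0⟩ := hne
      have hx0' : A x0 = -β := eq_neg_of_add_eq_zero_left hx0
      have hset : {x : EuclideanSpace ℝ (Fin d) | A x + β = 0}
          = (fun x => x + (-x0)) ⁻¹' ((LinearMap.ker (A : EuclideanSpace ℝ (Fin d) →ₗ[ℝ] EuclideanSpace ℝ (Fin d))) : Set (EuclideanSpace ℝ (Fin d))) := by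
        ext x
        simp only [Set.mem_preimage, SetLike.mem_coe, LinearMap.mem_ker, Set.mem_setOf_eq,
          map_add, map_neg, ContinuousLinearMap.coe_coe]
        constructor
        · intro hx
          rw [eq_neg_of_add_eq_zero_left hx, hx0']
          abel
        · intro hx
          have : A x = A x0 := by
            have := add_neg_eq_zero.mp hx
            exact this
          rw [this, hx0']
          abel
      have hker : LinearMap.ker (A : EuclideanSpace ℝ (Fin d) →ₗ[ℝ] EuclideanSpace ℝ (Fin d)) ≠ ⊤ := by
        intro htop
        apply hA
        refine ContinuousLinearMap.ext fun x => ?_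
        have : x ∈ LinearMap.ker (A : EuclideanSpace ℝ (Fin d) →ₗ[ℝ] EuclideanSpace ℝ (Fin d)) := htop ▸ Submodule.mem_top
        simpa using this
      rw [hset, measure_preimage_add_right]
      exact Measure.addHaar_submodule volume _ hker
    · have : {x : EuclideanSpace ℝ (Fin d) | A x + β = 0} = ∅ := by
        ext x; simp only [Set.mem_setOf_eq, Set.mem_empty_iff_false, iff_false]
        exact fun hx => hne ⟨x, hx⟩
      simp [this]

/-- Dichotomy for sequences of affine maps: up to a subsequence, either they are
uniformly bounded on the unit ball, or they diverge to infinity a.e. -/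
theorem affine_dichotomy (d : ℕ)
    (L : ℕ → (EuclideanSpace ℝ (Fin d)) →ₗ[ℝ] EuclideanSpace ℝ (Fin d))
    (b : ℕ → EuclideanSpace ℝ (Fin d)) :
    ∃ φ : ℕ → ℕ, StrictMono φ ∧
      Xor' (∃ C : ℝ, ∀ k : ℕ, ∀ x : EuclideanSpace ℝ (Fin d), ‖x‖ ≤ 1 →
              ‖L (φ k) x + b (φ k)‖ ≤ C)
           (∀ᵐ x ∂(volume : Measure (EuclideanSpace ℝ (Fin d))),
              Tendsto (fun k => ‖L (φ k) x + b (φ k)‖) atTop atTop) := by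
  classical
  set T : ℕ → (EuclideanSpace ℝ (Fin d) →L[ℝ] EuclideanSpace ℝ (Fin d)) :=
    fun k => LinearMap.toContinuousLinearMap (L k) with hT
  have hTL : ∀ k x, L k x = T k x := fun k x => rfl
  set M : ℕ → ℝ := fun k => ‖T k‖ + ‖b k‖ with hM
  by_cases hbd : ∃ C : ℝ, ∃ᶠ k in atTop, M k ≤ C
  · -- bounded case
    obtain ⟨C, hC⟩ := hbd
    obtain ⟨φ, hφ, hφC⟩ := extraction_of_frequently_atTop hC
    refine ⟨φ, hφ, Or.inl ⟨⟨C, fun k x hx => ?_⟩, fun hae => ?_⟩⟩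
    · have h1 : ‖L (φ k) x + b (φ k)‖ ≤ ‖T (φ k) x‖ + ‖b (φ k)‖ := by
        rw [hTL]; exact norm_add_le _ _
      have h2 := (T (φ k)).le_opNorm x
      have h3 := mul_le_mul_of_nonneg_left hx (norm_nonneg (T (φ k)))
      have h4 := hφC k
      simp only [hM] at h4
      nlinarith
    · -- the a.e. divergence fails on the unit ball
      have hsub : closedBall (0 : EuclideanSpace ℝ (Fin d)) 1 ⊆
          {x | ¬ Tendsto (fun k => ‖L (φ k) x + b (φ k)‖) atTop atTop} := by
        intro x hx ht
        obtain ⟨k, hk⟩ := (tendsto_atTop.mp ht (C + 1)).exists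
        have hb : ‖L (φ k) x + b (φ k)‖ ≤ C := by
          have h1 : ‖L (φ k) x + b (φ k)‖ ≤ ‖T (φ k) x‖ + ‖b (φ k)‖ := by
            rw [hTL]; exact norm_add_le _ _
          have h2 := (T (φ k)).le_opNorm x
          have hx1 : ‖x‖ ≤ 1 := mem_closedBall_zero_iff.mp hx
          have h3 := mul_le_mul_of_nonneg_left hx1 (norm_nonneg (T (φ k)))
          have h4 := hφC k
          simp only [hM] at h4
          nlinarith
        linarith
      have h0 : (volume : Measure (EuclideanSpace ℝ (Fin d)))
          (closedBall (0 : EuclideanSpace ℝ (Fin d)) 1) = 0 :=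
        measure_mono_null hsub (ae_iff.mp hae)
      exact absurd h0 (measure_closedBall_pos volume 0 one_pos).ne'
  · -- unbounded case
    push_neg at hbd
    have hMtop : Tendsto M atTop atTop := by
      refine tendsto_atTop.2 fun C => ?_
      have := hbd C
      exact this.mono fun k hk => hk.le
    obtain ⟨N, hN⟩ := eventually_atTop.mp (hMtop.eventually_ge_atTop 1)
    have hMpos : ∀ k : ℕ, 0 < M (k + N) :=
      fun k => lt_of_lt_of_le one_pos (hN (k + N) (Nat.le_add_left N k))
    set v : ℕ → ((EuclideanSpace ℝ (Fin d) →L[ℝ] EuclideanSpace ℝ (Fin d))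
        × EuclideanSpace ℝ (Fin d)) :=
      fun k => ((M (k + N))⁻¹ • T (k + N), (M (k + N))⁻¹ • b (k + N)) with hv
    have hvsum : ∀ k, ‖(v k).1‖ + ‖(v k).2‖ = 1 := by
      intro k
      show ‖(M (k + N))⁻¹ • T (k + N)‖ + ‖(M (k + N))⁻¹ • b (k + N)‖ = 1
      rw [norm_smul ((M (k + N))⁻¹) (T (k + N)), norm_smul ((M (k + N))⁻¹) (b (k + N)),
        norm_inv, Real.norm_of_nonneg (hMpos k).le, ← mul_add,
        inv_mul_cancel₀ (hMpos k).ne']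
    have hmem : ∀ k, v k ∈ closedBall (0 : (EuclideanSpace ℝ (Fin d) →L[ℝ]
        EuclideanSpace ℝ (Fin d)) × EuclideanSpace ℝ (Fin d)) 1 := by
      intro k
      rw [mem_closedBall_zero_iff, Prod.norm_def]
      have h1 := norm_nonneg (v k).1
      have h2 := norm_nonneg (v k).2
      have := hvsum k
      exact max_le (by linarith) (by linarith)
    obtain ⟨p, -, ψ, hψ, hconv⟩ := (isCompact_closedBall _ 1).tendsto_subseq hmem
    have hA1 : Tendsto (fun k => (v (ψ k)).1) atTop (𝓝 p.1) :=
      (continuous_fst.tendsto p).comp hconv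
    have hA2 : Tendsto (fun k => (v (ψ k)).2) atTop (𝓝 p.2) :=
      (continuous_snd.tendsto p).comp hconv
    have hsum1 : ‖p.1‖ + ‖p.2‖ = 1 := by
      have h1 : Tendsto (fun k => ‖(v (ψ k)).1‖ + ‖(v (ψ k)).2‖) atTop (𝓝 (‖p.1‖ + ‖p.2‖)) :=
        hA1.norm.add hA2.norm
      have h2 : Tendsto (fun k => ‖(v (ψ k)).1‖ + ‖(v (ψ k)).2‖) atTop (𝓝 1) := by
        simp only [hvsum]; exact tendsto_const_nhds
      exact tendsto_nhds_unique h1 h2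
    have hp0 : p.1 ≠ 0 ∨ p.2 ≠ 0 := by
      by_contra hcon
      push_neg at hcon
      rw [hcon.1, hcon.2, norm_zero, norm_zero] at hsum1
      norm_num at hsum1
    set φ : ℕ → ℕ := fun k => ψ k + N with hφdef
    have hφ : StrictMono φ := fun a c h => Nat.add_lt_add_right (hψ h) N
    have hMφ : Tendsto (fun k => M (φ k)) atTop atTop :=
      hMtop.comp ((tendsto_add_atTop_nat N).comp hψ.tendsto_atTop)
    refine ⟨φ, hφ, Or.inr ⟨?_, ?_⟩⟩
    · -- a.e. divergence
      have hnull : (volume : Measure (EuclideanSpace ℝ (Fin d))) {x | p.1 x + p.2 = 0} = 0 :=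
        affine_null_aux p.1 p.2 hp0
      have hae : ∀ᵐ x ∂(volume : Measure (EuclideanSpace ℝ (Fin d))), p.1 x + p.2 ≠ 0 := by
        refine ae_iff.2 ?_
        simpa using hnull
      filter_upwards [hae] with x hx
      have hval : Tendsto (fun k => (v (ψ k)).1 x + (v (ψ k)).2) atTop (𝓝 (p.1 x + p.2)) := by
        have h1 : Tendsto (fun k => (v (ψ k)).1 x) atTop (𝓝 (p.1 x)) :=
          ((ContinuousLinearMap.apply ℝ (EuclideanSpace ℝ (Fin d)) x).continuous.tendsto
            p.1).comp hA1
        exact h1.add hA2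
      have hnormpos : 0 < ‖p.1 x + p.2‖ := norm_pos_iff.mpr hx
      have hmul : Tendsto (fun k => M (φ k) * ‖(v (ψ k)).1 x + (v (ψ k)).2‖) atTop atTop :=
        hMφ.atTop_mul_pos hnormpos hval.norm
      refine hmul.congr fun k => ?_
      have : (v (ψ k)).1 x + (v (ψ k)).2 = (M (φ k))⁻¹ • (T (φ k) x + b (φ k)) := by
        simp only [hv, hφdef, ContinuousLinearMap.smul_apply, smul_add]
      rw [this, norm_smul, norm_inv, Real.norm_of_nonneg (hMpos (ψ k)).le, hTL]
      rw [← mul_assoc, mul_inv_cancel₀ (hMpos (ψ k)).ne', one_mul]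
    · -- boundedness fails
      rintro ⟨C, hC⟩
      have hb : ∀ k, ‖b (φ k)‖ ≤ C := by
        intro k
        have := hC k 0 (by simp)
        simpa [hTL] using this
      have hC0 : 0 ≤ C := le_trans (norm_nonneg _) (hb 0)
      have hTle : ∀ k, ‖T (φ k)‖ ≤ 2 * C := by
        intro k
        refine (T (φ k)).opNorm_le_bound (by linarith) fun x => ?_
        rcases eq_or_ne x 0 with rfl | hx
        · simp
        · have hy : ‖‖x‖⁻¹ • x‖ = 1 := norm_smul_inv_norm hx
          have h1 : ‖T (φ k) (‖x‖⁻¹ • x)‖ ≤ 2 * C := by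
            have h2 := hC k (‖x‖⁻¹ • x) hy.le
            rw [hTL] at h2
            have h3 : ‖T (φ k) (‖x‖⁻¹ • x)‖
                ≤ ‖T (φ k) (‖x‖⁻¹ • x) + b (φ k)‖ + ‖b (φ k)‖ := by
              have := norm_sub_le (T (φ k) (‖x‖⁻¹ • x) + b (φ k)) (b (φ k))
              simpa using this
            linarith [hb k]
          have hsm : T (φ k) (‖x‖⁻¹ • x) = ‖x‖⁻¹ • T (φ k) x := (T (φ k)).map_smul _ _
          rw [hsm, norm_smul, norm_inv, Real.norm_of_nonneg (norm_nonneg x)] at h1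
          have hxpos : 0 < ‖x‖ := norm_pos_iff.mpr hx
          calc ‖T (φ k) x‖ = ‖x‖ * (‖x‖⁻¹ * ‖T (φ k) x‖) := by
                field_simp
            _ ≤ ‖x‖ * (2 * C) := by gcongr
            _ = 2 * C * ‖x‖ := by ring
      obtain ⟨k, hk⟩ := (hMφ.eventually_ge_atTop (3 * C + 1)).exists
      have : M (φ k) ≤ 3 * C := by
        have := hTle k
        have := hb k
        simp only [hM]
        linarith
      linarith
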